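/- For every natural number m ≥ 2, there is no function F : ℝ → ℝ such that ∑_j (ν j − 1) = F(∑_j log(ν j)) holds for all ν : Fin m → ℝ with ν j ≥ 1 for every j. In particular, for any real C > 1, the choices (√C, √C) and (C, 1) (padded with 1's) have equal values of ∑_j log(ν j) (namely log C) but different values of ∑_j (ν j − 1), since 2(√C − 1) < C − 1. -/

import Mathlib

lemma sum_ite_lt2 (m : ℕ) (hm : 2 ≤ m) (a : ℝ) :
    ∑ j : Fin m, (if (j : ℕ) < 2 then a else 0) = 2 * a := by
  rw [← Finset.sum_filter]
  have h : (Finset.univ.filter (fun j : Fin m => (j : ℕ) < 2))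
      = {⟨0, by omega⟩, ⟨1, by omega⟩} := by
    ext j
    simp only [Finset.mem_filter, Finset.mem_univ, true_and, Finset.mem_insert,
      Finset.mem_singleton]
    constructor
    · intro h
      rcases (by omega : (j:ℕ) = 0 ∨ (j:ℕ) = 1) with h | h
      · left; exact Fin.ext h
      · right; exact Fin.ext h
    · rintro (rfl | rfl) <;> simp
  rw [h, Finset.sum_insert (by simp [Fin.ext_iff]), Finset.sum_singleton]
  ring

lemma sum_ite_eq0 (m : ℕ) (hm : 2 ≤ m) (a : ℝ) :
    ∑ j : Fin m, (if (j : ℕ) = 0 then a else 0) = a := by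
  rw [← Finset.sum_filter]
  have h : (Finset.univ.filter (fun j : Fin m => (j : ℕ) = 0))
      = {⟨0, by omega⟩} := by
    ext j
    simp only [Finset.mem_filter, Finset.mem_univ, true_and, Finset.mem_singleton,
      Fin.ext_iff]
  rw [h, Finset.sum_singleton]

lemma key_facts (m : ℕ) (hm : 2 ≤ m) (C : ℝ) (hC : 1 < C) :
      (∑ j : Fin m, Real.log (if (j : ℕ) < 2 then Real.sqrt C else 1) = Real.log C) ∧
      (∑ j : Fin m, Real.log (if (j : ℕ) = 0 then C else 1) = Real.log C) ∧
      (∑ j : Fin m, ((if (j : ℕ) < 2 then Real.sqrt C else 1) - 1)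
        = 2 * (Real.sqrt C - 1)) ∧
      (∑ j : Fin m, ((if (j : ℕ) = 0 then C else 1) - 1) = C - 1) ∧
      2 * (Real.sqrt C - 1) < C - 1 := by
  have hC0 : 0 < C := by linarith
  have hs1 : 1 < Real.sqrt C := by
    rw [show (1:ℝ) = Real.sqrt 1 by simp]
    exact Real.sqrt_lt_sqrt (by norm_num) hC
  refine ⟨?_, ?_, ?_, ?_, ?_⟩
  · have : ∀ j : Fin m, Real.log (if (j : ℕ) < 2 then Real.sqrt C else 1)
        = (if (j : ℕ) < 2 then Real.log (Real.sqrt C) else 0) := by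
      intro j; split <;> simp
    rw [Finset.sum_congr rfl (fun j _ => this j), sum_ite_lt2 m hm,
      Real.log_sqrt hC0.le]
    ring
  · have : ∀ j : Fin m, Real.log (if (j : ℕ) = 0 then C else 1)
        = (if (j : ℕ) = 0 then Real.log C else 0) := by
      intro j; split <;> simp
    rw [Finset.sum_congr rfl (fun j _ => this j), sum_ite_eq0 m hm]
  · have : ∀ j : Fin m, ((if (j : ℕ) < 2 then Real.sqrt C else 1) - 1)
        = (if (j : ℕ) < 2 then Real.sqrt C - 1 else 0) := by
      intro j; split <;> simp
    rw [Finset.sum_congr rfl (fun j _ => this j), sum_ite_lt2 m hm]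
  · have : ∀ j : Fin m, ((if (j : ℕ) = 0 then C else 1) - 1)
        = (if (j : ℕ) = 0 then C - 1 else 0) := by
      intro j; split <;> simp
    rw [Finset.sum_congr rfl (fun j _ => this j), sum_ite_eq0 m hm]
  · have h1 : Real.sqrt C * Real.sqrt C = C := Real.mul_self_sqrt hC0.le
    nlinarith [sq_nonneg (Real.sqrt C - 1)]

/-- For m ≥ 2 there is no function F with ∑ (ν j − 1) = F (∑ log (ν j)) for all
ν ≥ 1; in particular, for any C > 1 the padded spectra (√C, √C, 1, …) and
(C, 1, 1, …) have equal log-sums (= log C) but different gap-sums, since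
2(√C − 1) < C − 1. -/
theorem no_functional_dependence (m : ℕ) (hm : 2 ≤ m) :
    (¬ ∃ F : ℝ → ℝ, ∀ ν : Fin m → ℝ, (∀ j, 1 ≤ ν j) →
        ∑ j, (ν j - 1) = F (∑ j, Real.log (ν j))) ∧
    ∀ C : ℝ, 1 < C →
      (∑ j : Fin m, Real.log (if (j : ℕ) < 2 then Real.sqrt C else 1) = Real.log C) ∧
      (∑ j : Fin m, Real.log (if (j : ℕ) = 0 then C else 1) = Real.log C) ∧
      (∑ j : Fin m, ((if (j : ℕ) < 2 then Real.sqrt C else 1) - 1)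
        = 2 * (Real.sqrt C - 1)) ∧
      (∑ j : Fin m, ((if (j : ℕ) = 0 then C else 1) - 1) = C - 1) ∧
      2 * (Real.sqrt C - 1) < C - 1 := by
  constructor
  · rintro ⟨F, hF⟩
    obtain ⟨h1, h2, h3, h4, h5⟩ := key_facts m hm 4 (by norm_num)
    have hs1 : (1:ℝ) ≤ Real.sqrt 4 := by
      rw [show (1:ℝ) = Real.sqrt 1 by simp]
      exact Real.sqrt_le_sqrt (by norm_num)
    have e1 := hF (fun j => if (j : ℕ) < 2 then Real.sqrt 4 else 1)
      (fun j => by split <;> simp [hs1])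
    have e2 := hF (fun j => if (j : ℕ) = 0 then (4:ℝ) else 1)
      (fun j => by split <;> norm_num)
    rw [h3, h1] at e1
    rw [h4, h2] at e2
    rw [e1, e2] at h5
    exact lt_irrefl _ h5
  · exact key_facts m hm
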